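/- Every minimal generator of the intersection ideal V_n ∩ U_n either is divisible by y_{n-1} or is divisible by x_{n-2}x_{2n-3}, and not both, yielding a decomposition V_n ∩ U_n = V̂_n + Û_n into the ideals generated by the respective subsets of minimal generators. -/

import Mathlib

/-- The vertical domino occupying column `k` (0-indexed) of a 2×n board. -/
def Vert (k : ℕ) : Finset (ℕ × ℕ) := {(0, k), (1, k)}

/-- The horizontal domino in row `i` covering columns `k` and `k+1`. -/
def Horiz (i k : ℕ) : Finset (ℕ × ℕ) := {(i, k), (i, k + 1)}

/-- A domino on the 2×n board. -/
def IsDomino (n : ℕ) (d : Finset (ℕ × ℕ)) : Prop :=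
  (∃ k < n, d = Vert k) ∨ (∃ i < 2, ∃ k, k + 1 < n ∧ d = Horiz i k)

/-- `T` is a domino tiling of the 2×n board: a set of dominoes, pairwise disjoint,
covering exactly the cells of the board. -/
def IsTiling (n : ℕ) (T : Finset (Finset (ℕ × ℕ))) : Prop :=
  (∀ d ∈ T, IsDomino n d) ∧
  (∀ c : ℕ × ℕ, (c.1 < 2 ∧ c.2 < n) ↔ ∃ d ∈ T, c ∈ d) ∧
  (∀ d ∈ T, ∀ e ∈ T, d ≠ e → Disjoint d e)

/-- `T_n`, the set of all domino tilings of the 2×n rectangle. -/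
def Tilings (n : ℕ) : Set (Finset (Finset (ℕ × ℕ))) := {T | IsTiling n T}

open scoped Classical

/-- The variable (in the paper's 1-indexed labelling) attached to a domino of the 2×n board:
the vertical domino in column k (1-indexed) ↦ y_k = `Sum.inr k`, the top horizontal domino
starting in column k ↦ x_k = `Sum.inl k`, the bottom one ↦ x_{n-1+k} = `Sum.inl (n-1+k)`. -/
noncomputable def dominoVar (n : ℕ) (d : Finset (ℕ × ℕ)) : ℕ ⊕ ℕ :=
  if h : ∃ k, d = Vert k then Sum.inr (h.choose + 1)
  else if h2 : ∃ k, d = Horiz 0 k then Sum.inl (h2.choose + 1)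
  else if h3 : ∃ k, d = Horiz 1 k then Sum.inl (n + h3.choose)
  else Sum.inl 0

/-- The squarefree monomial (in `K[x_1,…,x_{2n-2},y_1,…,y_n]`, realized as
`MvPolynomial (ℕ ⊕ ℕ) K` with x_i = `X (Sum.inl i)` and y_i = `X (Sum.inr i)`)
associated to a tiling `T`, using the labelling of the 2×n board. -/
noncomputable def dominoMonomial (K : Type*) [Field K] (n : ℕ)
    (T : Finset (Finset (ℕ × ℕ))) : MvPolynomial (ℕ ⊕ ℕ) K :=
  ∏ d ∈ T, MvPolynomial.X (dominoVar n d)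

/-- The ideal generated by the tiling monomials of all tilings of a 2×m rectangle,
labelled as dominoes of the ambient 2×n board. -/
noncomputable def dominoIdealIn (K : Type*) [Field K] (n m : ℕ) :
    Ideal (MvPolynomial (ℕ ⊕ ℕ) K) :=
  Ideal.span {p | ∃ T, IsTiling m T ∧ p = dominoMonomial K n T}

/-- The domino ideal `I_n`. -/
noncomputable def dominoIdeal (K : Type*) [Field K] (n : ℕ) :
    Ideal (MvPolynomial (ℕ ⊕ ℕ) K) := dominoIdealIn K n n

/-- `V_n`: the ideal generated by the tilings containing the vertical domino `y_n`. -/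
noncomputable def Vn (K : Type*) [Field K] (n : ℕ) : Ideal (MvPolynomial (ℕ ⊕ ℕ) K) :=
  Ideal.span {p | ∃ T, IsTiling n T ∧ Vert (n - 1) ∈ T ∧ p = dominoMonomial K n T}

/-- `U_n`: the ideal generated by the tilings containing the two rightmost horizontal
dominoes `x_{n-1}` and `x_{2n-2}`. -/
noncomputable def Un (K : Type*) [Field K] (n : ℕ) : Ideal (MvPolynomial (ℕ ⊕ ℕ) K) :=
  Ideal.span {p | ∃ T, IsTiling n T ∧ Horiz 0 (n - 2) ∈ T ∧ Horiz 1 (n - 2) ∈ T ∧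
    p = dominoMonomial K n T}

/-- The set of (exponent vectors of) minimal monomial generators of a monomial ideal:
monomials of the ideal not strictly divisible by any other monomial of the ideal. -/
def minGens {K : Type*} [Field K] {σ : Type*} (I : Ideal (MvPolynomial σ K)) :
    Set (σ →₀ ℕ) :=
  {a | MvPolynomial.monomial a (1 : K) ∈ I ∧
      ∀ b : σ →₀ ℕ, b ≤ a → MvPolynomial.monomial b (1 : K) ∈ I → b = a}

open MvPolynomial

lemma mem_Vert {c : ℕ×ℕ} {k} : c ∈ Vert k ↔ c = (0,k) ∨ c = (1,k) := by
  simp [Vert]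

lemma mem_Horiz {c : ℕ×ℕ} {i k} : c ∈ Horiz i k ↔ c = (i,k) ∨ c = (i,k+1) := by
  simp [Horiz]

lemma Vert_inj {k k'} (h : Vert k = Vert k') : k = k' := by
  have h0 : ((0:ℕ),k) ∈ Vert k' := by rw [← h]; simp [Vert]
  rcases mem_Vert.1 h0 with h1|h1 <;> simp only [Prod.mk.injEq] at h1 <;> omega

lemma Horiz_ne_Vert {i k k'} : Horiz i k ≠ Vert k' := by
  intro h
  have h0 : ((0:ℕ),k') ∈ Horiz i k := by rw [h]; simp [Vert]
  have h1 : ((1:ℕ),k') ∈ Horiz i k := by rw [h]; simp [Vert]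
  rcases mem_Horiz.1 h0 with h2|h2 <;> rcases mem_Horiz.1 h1 with h3|h3 <;>
    simp only [Prod.mk.injEq] at h2 h3 <;> omega

lemma Horiz_inj {i k i' k'} (h : Horiz i k = Horiz i' k') : i = i' ∧ k = k' := by
  have h0 : ((i:ℕ),k) ∈ Horiz i' k' := by rw [← h]; simp [Horiz]
  have h1 : ((i:ℕ),k+1) ∈ Horiz i' k' := by rw [← h]; simp [Horiz]
  rcases mem_Horiz.1 h0 with h2|h2 <;> rcases mem_Horiz.1 h1 with h3|h3 <;>
    simp only [Prod.mk.injEq] at h2 h3 <;> omega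

lemma dominoVar_Vert (n k : ℕ) : dominoVar n (Vert k) = Sum.inr (k+1) := by
  have h : ∃ k', Vert k = Vert k' := ⟨k, rfl⟩
  rw [dominoVar, dif_pos h, ← Vert_inj h.choose_spec]

lemma dominoVar_Horiz0 (n k : ℕ) : dominoVar n (Horiz 0 k) = Sum.inl (k+1) := by
  have h1 : ¬ ∃ k', Horiz 0 k = Vert k' := by rintro ⟨k', hk⟩; exact Horiz_ne_Vert hk
  have h2 : ∃ k', Horiz 0 k = Horiz 0 k' := ⟨k, rfl⟩
  rw [dominoVar, dif_neg h1, dif_pos h2, ← (Horiz_inj h2.choose_spec).2]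

lemma dominoVar_Horiz1 (n k : ℕ) : dominoVar n (Horiz 1 k) = Sum.inl (n+k) := by
  have h1 : ¬ ∃ k', Horiz 1 k = Vert k' := by rintro ⟨k', hk⟩; exact Horiz_ne_Vert hk
  have h2 : ¬ ∃ k', Horiz 1 k = Horiz 0 k' := by
    rintro ⟨k', hk⟩; exact one_ne_zero (Horiz_inj hk).1
  have h3 : ∃ k', Horiz 1 k = Horiz 1 k' := ⟨k, rfl⟩
  rw [dominoVar, dif_neg h1, dif_neg h2, dif_pos h3, ← (Horiz_inj h3.choose_spec).2]

noncomputable def tExp (n : ℕ) (T : Finset (Finset (ℕ×ℕ))) : (ℕ ⊕ ℕ) →₀ ℕ :=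
  ∑ d ∈ T, Finsupp.single (dominoVar n d) 1

lemma tiling_unique {n T} (hT : IsTiling n T) {d e} (hd : d ∈ T) (he : e ∈ T)
    {c} (hcd : c ∈ d) (hce : c ∈ e) : d = e := by
  by_contra hne
  exact (Finset.disjoint_left.1 (hT.2.2 d hd e he hne)) hcd hce

lemma classify0 {n d j} (hd : IsDomino n d) (h : ((0:ℕ),j) ∈ d) :
    d = Vert j ∨ d = Horiz 0 j ∨ ∃ k, j = k + 1 ∧ d = Horiz 0 k := by
  rcases hd with ⟨k,hk,rfl⟩ | ⟨i,hi,k,hk,rfl⟩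
  · rcases mem_Vert.1 h with h|h <;> simp only [Prod.mk.injEq] at h
    · obtain ⟨-, rfl⟩ := h; exact Or.inl rfl
    · omega
  · rcases mem_Horiz.1 h with h|h <;> simp only [Prod.mk.injEq] at h
    · obtain ⟨h1, rfl⟩ := h; subst h1; exact Or.inr (Or.inl rfl)
    · obtain ⟨h1, h2⟩ := h; subst h1; exact Or.inr (Or.inr ⟨k, h2, rfl⟩)

lemma classify1 {n d j} (hd : IsDomino n d) (h : ((1:ℕ),j) ∈ d) :
    d = Vert j ∨ d = Horiz 1 j ∨ ∃ k, j = k + 1 ∧ d = Horiz 1 k := by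
  rcases hd with ⟨k,hk,rfl⟩ | ⟨i,hi,k,hk,rfl⟩
  · rcases mem_Vert.1 h with h|h <;> simp only [Prod.mk.injEq] at h
    · omega
    · obtain ⟨-, rfl⟩ := h; exact Or.inl rfl
  · rcases mem_Horiz.1 h with h|h <;> simp only [Prod.mk.injEq] at h
    · obtain ⟨h1, rfl⟩ := h; subst h1; exact Or.inr (Or.inl rfl)
    · obtain ⟨h1, h2⟩ := h; subst h1; exact Or.inr (Or.inr ⟨k, h2, rfl⟩)

lemma V_struct {m : ℕ} {T} (hT : IsTiling (m+4) T) (hv : Vert (m+3) ∈ T) :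
    Vert (m+2) ∈ T ∨ (Horiz 0 (m+1) ∈ T ∧ Horiz 1 (m+1) ∈ T) := by
  obtain ⟨d, hdT, hd⟩ := (hT.2.1 (0, m+2)).1 ⟨by norm_num, by omega⟩
  rcases classify0 (hT.1 d hdT) hd with rfl | rfl | ⟨k, hk, rfl⟩
  · exact Or.inl hdT
  · have := tiling_unique hT hdT hv (c := (0, m+3)) (by simp [Horiz]) (by simp [Vert])
    exact absurd this Horiz_ne_Vert
  · obtain rfl : k = m+1 := by omega
    obtain ⟨e, heT, he⟩ := (hT.2.1 (1, m+2)).1 ⟨by norm_num, by omega⟩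
    rcases classify1 (hT.1 e heT) he with rfl | rfl | ⟨k', hk', rfl⟩
    · have := tiling_unique hT hdT heT (c := (0, m+2)) (by simp [Horiz]) (by simp [Vert])
      exact absurd this Horiz_ne_Vert
    · have := tiling_unique hT heT hv (c := (1, m+3)) (by simp [Horiz]) (by simp [Vert])
      exact absurd this Horiz_ne_Vert
    · obtain rfl : k' = m+1 := by omega
      exact Or.inr ⟨hdT, heT⟩

lemma tExp_apply_eq_zero {n S v} (h : ∀ d ∈ S, dominoVar n d ≠ v) : tExp n S v = 0 := by
  rw [tExp, Finsupp.finset_sum_apply]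
  exact Finset.sum_eq_zero fun d hd => Finsupp.single_eq_of_ne' (h d hd)

lemma exists_domino_of_pos {n T v} (h : tExp n T v ≠ 0) : ∃ d ∈ T, dominoVar n d = v := by
  by_contra hc; push_neg at hc; exact h (tExp_apply_eq_zero hc)

lemma single_le_tExp {n T d} (hd : d ∈ T) : Finsupp.single (dominoVar n d) 1 ≤ tExp n T :=
  Finset.single_le_sum (f := fun e => Finsupp.single (dominoVar n e) (1:ℕ))
    (fun i _ => zero_le) hd

lemma pair_le_tExp {n T d e} (hd : d ∈ T) (he : e ∈ T) (hne : d ≠ e) :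
    Finsupp.single (dominoVar n d) 1 + Finsupp.single (dominoVar n e) 1 ≤ tExp n T := by
  have hsub : ({d, e} : Finset _) ⊆ T := by
    intro x hx
    rcases Finset.mem_insert.1 hx with rfl|hx
    · exact hd
    · rw [Finset.mem_singleton.1 hx]; exact he
  calc Finsupp.single (dominoVar n d) 1 + Finsupp.single (dominoVar n e) 1
      = ∑ x ∈ ({d,e} : Finset _), Finsupp.single (dominoVar n x) 1 :=
        (Finset.sum_pair (f := fun x => Finsupp.single (dominoVar n x) (1:ℕ)) hne).symm
    _ ≤ tExp n T := Finset.sum_le_sum_of_subset hsub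

lemma var_inr_m3 {m : ℕ} {d} (hd : IsDomino (m+4) d)
    (h : dominoVar (m+4) d = Sum.inr (m+3)) : d = Vert (m+2) := by
  rcases hd with ⟨k, hk, rfl⟩ | ⟨i, hi, k, hk, rfl⟩
  · rw [dominoVar_Vert] at h
    injection h with h
    obtain rfl : k = m+2 := by omega
    rfl
  · interval_cases i
    · rw [dominoVar_Horiz0] at h; exact absurd h (by simp)
    · rw [dominoVar_Horiz1] at h; exact absurd h (by simp)

lemma var_inl_m2 {m : ℕ} {d} (hd : IsDomino (m+4) d)
    (h : dominoVar (m+4) d = Sum.inl (m+2)) : d = Horiz 0 (m+1) := by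
  rcases hd with ⟨k, hk, rfl⟩ | ⟨i, hi, k, hk, rfl⟩
  · rw [dominoVar_Vert] at h; exact absurd h (by simp)
  · interval_cases i
    · rw [dominoVar_Horiz0] at h
      injection h with h
      obtain rfl : k = m+1 := by omega
      rfl
    · rw [dominoVar_Horiz1] at h
      injection h with h
      omega

lemma U_zero {m : ℕ} {S} (hS : IsTiling (m+4) S) (h0 : Horiz 0 (m+2) ∈ S) :
    tExp (m+4) S (Sum.inr (m+3)) = 0 ∧ tExp (m+4) S (Sum.inl (m+2)) = 0 := by
  constructor <;> apply tExp_apply_eq_zero <;> intro d hd h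
  · obtain rfl := var_inr_m3 (hS.1 d hd) h
    have := tiling_unique hS hd h0 (c := (0, m+2)) (by simp [Vert]) (by simp [Horiz])
    exact Horiz_ne_Vert this.symm
  · obtain rfl := var_inl_m2 (hS.1 d hd) h
    have := tiling_unique hS hd h0 (c := (0, m+2)) (by simp [Horiz]) (by simp [Horiz])
    exact absurd (Horiz_inj this).2 (by omega)

lemma A_not_both {m : ℕ} {T} (hT : IsTiling (m+4) T)
    (h1 : tExp (m+4) T (Sum.inr (m+3)) ≠ 0)
    (h2 : tExp (m+4) T (Sum.inl (m+2)) ≠ 0) : False := by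
  obtain ⟨d, hd, hvd⟩ := exists_domino_of_pos h1
  obtain ⟨e, he, hve⟩ := exists_domino_of_pos h2
  obtain rfl := var_inr_m3 (hT.1 d hd) hvd
  obtain rfl := var_inl_m2 (hT.1 e he) hve
  have := tiling_unique hT hd he (c := (0, m+2)) (by simp [Vert]) (by simp [Horiz])
  exact Horiz_ne_Vert this.symm

lemma dominoMonomial_eq (K : Type*) [Field K] (n : ℕ) (T : Finset (Finset (ℕ×ℕ))) :
    dominoMonomial K n T = monomial (tExp n T) (1:K) := by
  classical
  induction T using Finset.induction_on with
  | empty => simp [dominoMonomial, tExp]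
  | @insert d T h ih =>
    have hins : tExp n (insert d T) = Finsupp.single (dominoVar n d) 1 + tExp n T :=
      Finset.sum_insert h
    have hX : (X (dominoVar n d) : MvPolynomial (ℕ ⊕ ℕ) K)
        = monomial (Finsupp.single (dominoVar n d) 1) 1 := by
      rw [← pow_one (X (dominoVar n d)), X_pow_eq_monomial]
    rw [dominoMonomial, Finset.prod_insert h, ← dominoMonomial, ih, hins, hX,
      monomial_mul, one_mul]

lemma mem_supp_mono {K : Type*} [Field K] {σ : Type*} {w xi : σ →₀ ℕ}
    (h : xi ∈ (monomial w (1:K)).support) : xi = w := by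
  classical
  rw [MvPolynomial.support_monomial, if_neg one_ne_zero] at h
  exact Finset.mem_singleton.1 h

lemma self_mem_supp_mono {K : Type*} [Field K] {σ : Type*} (w : σ →₀ ℕ) :
    w ∈ (monomial w (1:K)).support := by
  classical
  rw [MvPolynomial.support_monomial, if_neg one_ne_zero]
  exact Finset.mem_singleton_self w

lemma span_mono_inf {K : Type*} [Field K] {σ : Type*} (A B : Set (σ →₀ ℕ)) :
    Ideal.span ((fun w => monomial w (1:K)) '' A) ⊓ Ideal.span ((fun w => monomial w (1:K)) '' B)
      = Ideal.span ((fun w => monomial w (1:K)) '' {c | ∃ a ∈ A, ∃ b ∈ B, c = a ⊔ b}) := by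
  ext p
  rw [Submodule.mem_inf, mem_ideal_span_monomial_image, mem_ideal_span_monomial_image,
      mem_ideal_span_monomial_image]
  constructor
  · rintro ⟨hA, hB⟩ xi hxi
    obtain ⟨a, ha, hax⟩ := hA xi hxi
    obtain ⟨b, hb, hbx⟩ := hB xi hxi
    exact ⟨a ⊔ b, ⟨a, ha, b, hb, rfl⟩, sup_le hax hbx⟩
  · intro h
    constructor <;> intro xi hxi <;> obtain ⟨c, ⟨a, ha, b, hb, rfl⟩, hcx⟩ := h xi hxi
    · exact ⟨a, ha, le_trans le_sup_left hcx⟩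
    · exact ⟨b, hb, le_trans le_sup_right hcx⟩

lemma exists_minGen {K : Type*} [Field K] {σ : Type*} {I : Ideal (MvPolynomial σ K)}
    (c : σ →₀ ℕ) (hc : monomial c (1:K) ∈ I) : ∃ w ∈ minGens I, w ≤ c := by
  obtain ⟨w, ⟨hwle, hwI⟩, hmin⟩ := (wellFounded_lt (α := σ →₀ ℕ)).has_min
    {b | b ≤ c ∧ monomial b (1:K) ∈ I} ⟨c, le_refl c, hc⟩
  refine ⟨w, ⟨hwI, fun b hb hbI => ?_⟩, hwle⟩
  by_contra hne
  exact hmin b ⟨le_trans hb hwle, hbI⟩ (lt_of_le_of_ne hb hne)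

lemma Vn_eq (K : Type*) [Field K] (m : ℕ) :
    Vn K (m+4) = Ideal.span ((fun w => monomial w (1:K)) ''
      {w | ∃ T, IsTiling (m+4) T ∧ Vert (m+3) ∈ T ∧ w = tExp (m+4) T}) := by
  rw [Vn, show m+4-1 = m+3 from by omega]
  congr 1
  ext p
  constructor
  · rintro ⟨T, hT, hv, rfl⟩
    exact ⟨tExp (m+4) T, ⟨T, hT, hv, rfl⟩, (dominoMonomial_eq K _ T).symm⟩
  · rintro ⟨w, ⟨T, hT, hv, rfl⟩, rfl⟩
    exact ⟨T, hT, hv, (dominoMonomial_eq K _ T).symm⟩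

lemma Un_eq (K : Type*) [Field K] (m : ℕ) :
    Un K (m+4) = Ideal.span ((fun w => monomial w (1:K)) ''
      {w | ∃ S, IsTiling (m+4) S ∧ Horiz 0 (m+2) ∈ S ∧ Horiz 1 (m+2) ∈ S ∧
        w = tExp (m+4) S}) := by
  rw [Un, show m+4-2 = m+2 from by omega]
  congr 1
  ext p
  constructor
  · rintro ⟨S, hS, h0, h1, rfl⟩
    exact ⟨tExp (m+4) S, ⟨S, hS, h0, h1, rfl⟩, (dominoMonomial_eq K _ S).symm⟩
  · rintro ⟨w, ⟨S, hS, h0, h1, rfl⟩, rfl⟩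
    exact ⟨S, hS, h0, h1, (dominoMonomial_eq K _ S).symm⟩



/-- every minimal generator of V_n ∩ U_n is divisible by y_{n-1} or by
x_{n-2}x_{2n-3}, and not both, and V_n ∩ U_n decomposes as the sum of the ideals
generated by the two corresponding subsets of minimal generators. -/
theorem intersection_splitting (K : Type*) [Field K] :
    ∀ n : ℕ, 4 ≤ n →
      (∀ w ∈ minGens (Vn K n ⊓ Un K n),
        Xor' (Finsupp.single (Sum.inr (n - 1)) 1 ≤ w)
          ((Finsupp.single (Sum.inl (n - 2)) 1 + Finsupp.single (Sum.inl (2 * n - 3)) 1) ≤ w)) ∧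
      Vn K n ⊓ Un K n =
        Ideal.span ((fun w => MvPolynomial.monomial w (1 : K)) ''
          {w ∈ minGens (Vn K n ⊓ Un K n) | Finsupp.single (Sum.inr (n - 1)) 1 ≤ w}) ⊔
        Ideal.span ((fun w => MvPolynomial.monomial w (1 : K)) ''
          {w ∈ minGens (Vn K n ⊓ Un K n) |
            (Finsupp.single (Sum.inl (n - 2)) 1 + Finsupp.single (Sum.inl (2 * n - 3)) 1) ≤ w}) := by
  intro n hn
  obtain ⟨m, rfl⟩ : ∃ m, n = m + 4 := ⟨n - 4, by omega⟩
  rw [show m+4-1 = m+3 from by omega, show m+4-2 = m+2 from by omega,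
    show 2*(m+4)-3 = 2*m+5 from by omega]
  set A : Set ((ℕ ⊕ ℕ) →₀ ℕ) :=
    {w | ∃ T, IsTiling (m+4) T ∧ Vert (m+3) ∈ T ∧ w = tExp (m+4) T} with hA
  set B : Set ((ℕ ⊕ ℕ) →₀ ℕ) :=
    {w | ∃ S, IsTiling (m+4) S ∧ Horiz 0 (m+2) ∈ S ∧ Horiz 1 (m+2) ∈ S ∧
      w = tExp (m+4) S} with hB
  set C : Set ((ℕ ⊕ ℕ) →₀ ℕ) := {c | ∃ a ∈ A, ∃ b ∈ B, c = a ⊔ b} with hC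
  have hI : Vn K (m+4) ⊓ Un K (m+4)
      = Ideal.span ((fun w => monomial w (1:K)) '' C) := by
    rw [Vn_eq, Un_eq, span_mono_inf]
  -- monomial membership criterion
  have hmono : ∀ w : (ℕ ⊕ ℕ) →₀ ℕ,
      (monomial w (1:K) ∈ Vn K (m+4) ⊓ Un K (m+4)) ↔ ∃ c ∈ C, c ≤ w := by
    intro w
    rw [hI, mem_ideal_span_monomial_image]
    constructor
    · intro h; exact h w (self_mem_supp_mono w)
    · rintro ⟨c, hc, hcw⟩ xi hxi
      rw [mem_supp_mono hxi]
      exact ⟨c, hc, hcw⟩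
  -- structure of A-exponents
  have hAor : ∀ a ∈ A, Finsupp.single (Sum.inr (m+3)) 1 ≤ a ∨
      Finsupp.single (Sum.inl (m+2)) 1 + Finsupp.single (Sum.inl (2*m+5)) 1 ≤ a := by
    rintro a ⟨T, hT, hv, rfl⟩
    rcases V_struct hT hv with h | ⟨h0, h1⟩
    · left
      have := single_le_tExp (n := m+4) h
      rwa [dominoVar_Vert] at this
    · right
      have hp := pair_le_tExp (n := m+4) h0 h1
        (by intro hh; exact one_ne_zero (Horiz_inj hh).1.symm)
      rw [dominoVar_Horiz0, dominoVar_Horiz1,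
        show m+4+(m+1) = 2*m+5 from by omega, show m+1+1 = m+2 from by omega] at hp
      exact hp
  -- the Xor part
  have hOrMin : ∀ w ∈ minGens (Vn K (m+4) ⊓ Un K (m+4)),
      Finsupp.single (Sum.inr (m+3)) 1 ≤ w ∨
      Finsupp.single (Sum.inl (m+2)) 1 + Finsupp.single (Sum.inl (2*m+5)) 1 ≤ w := by
    rintro w ⟨hwI, -⟩
    obtain ⟨c, ⟨a, ha, b, hb, rfl⟩, hcw⟩ := (hmono w).1 hwI
    rcases hAor a ha with h | h
    · exact Or.inl (h.trans (le_sup_left.trans hcw))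
    · exact Or.inr (h.trans (le_sup_left.trans hcw))
  have hNot : ∀ w ∈ minGens (Vn K (m+4) ⊓ Un K (m+4)),
      ¬(Finsupp.single (Sum.inr (m+3)) 1 ≤ w ∧
        Finsupp.single (Sum.inl (m+2)) 1 + Finsupp.single (Sum.inl (2*m+5)) 1 ≤ w) := by
    rintro w ⟨hwI, hwmin⟩ ⟨hP, hQ⟩
    obtain ⟨c, hcC, hcw⟩ := (hmono w).1 hwI
    obtain ⟨a, ⟨T, hT, hv, rfl⟩, b, hbB, rfl⟩ := hcC
    obtain ⟨S, hS, h0, h1, rfl⟩ := hbB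
    have hcI : monomial (tExp (m+4) T ⊔ tExp (m+4) S) (1:K) ∈ Vn K (m+4) ⊓ Un K (m+4) :=
      (hmono _).2 ⟨_, ⟨_, ⟨T, hT, hv, rfl⟩, _, ⟨S, hS, h0, h1, rfl⟩, rfl⟩, le_rfl⟩
    have hw : tExp (m+4) T ⊔ tExp (m+4) S = w := hwmin _ hcw hcI
    have hz := U_zero hS h0
    have hP' : 1 ≤ w (Sum.inr (m+3)) := by
      have := hP (Sum.inr (m+3))
      rwa [Finsupp.single_eq_same] at this
    have hQ' : 1 ≤ w (Sum.inl (m+2)) := by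
      have := hQ (Sum.inl (m+2))
      rwa [Finsupp.add_apply, Finsupp.single_eq_same,
        Finsupp.single_eq_of_ne (by simp; omega), add_zero] at this
    rw [← hw, Finsupp.sup_apply, hz.1] at hP'
    rw [← hw, Finsupp.sup_apply, hz.2] at hQ'
    exact A_not_both hT (by omega) (by omega)
  constructor
  · intro w hw
    rcases hOrMin w hw with h | h
    · exact Or.inl ⟨h, fun h' => hNot w hw ⟨h, h'⟩⟩
    · exact Or.inr ⟨h, fun h' => hNot w hw ⟨h', h⟩⟩
  · apply le_antisymm
    · rw [← Ideal.span_union, ← Set.image_union]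
      conv_lhs => rw [hI]
      refine Ideal.span_le.2 ?_
      rintro p ⟨c, hcC, rfl⟩
      have hcI : monomial c (1:K) ∈ Vn K (m+4) ⊓ Un K (m+4) :=
        (hmono c).2 ⟨c, hcC, le_rfl⟩
      rw [SetLike.mem_coe, mem_ideal_span_monomial_image]
      intro xi hxi
      rw [mem_supp_mono hxi]
      obtain ⟨w', hw'min, hw'le⟩ := exists_minGen c hcI
      refine ⟨w', ?_, hw'le⟩
      rcases hOrMin w' hw'min with h | h
      · exact Or.inl ⟨hw'min, h⟩
      · exact Or.inr ⟨hw'min, h⟩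
    · refine sup_le (Ideal.span_le.2 ?_) (Ideal.span_le.2 ?_) <;>
        rintro p ⟨w, ⟨⟨hwI, -⟩, -⟩, rfl⟩ <;> exact hwI
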